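/- Let n ≥ 1, let v ∈ ℝⁿ be a nonzero vector, and let s ≥ 1 be an integer. Then the expected number of nonzero coordinates of the stochastic quantization Q_s(v) satisfies E[‖Q_s(v)‖₀] ≤ s·(s + √n), where ‖w‖₀ denotes the number of indices i with w_i ≠ 0. -/

import Mathlib

open MeasureTheory ProbabilityTheory

/-- `Qv` is (a realization on the probability space `(Ω, μ)` of) the stochastic
quantization `Q_s(v)` of the nonzero vector `v ∈ ℝⁿ` with `s` quantization levels:
`Q_s(v)_i = ‖v‖₂ · sgn(vᵢ) · ξᵢ`, where the `ξᵢ` are independent, and, with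
`aᵢ = |vᵢ|/‖v‖₂` and `ℓᵢ ∈ {0, …, s−1}` such that `aᵢ ∈ [ℓᵢ/s, (ℓᵢ+1)/s]`, `ξᵢ` takes
the value `(ℓᵢ+1)/s` with probability `pᵢ = aᵢ·s − ℓᵢ` and `ℓᵢ/s` with probability
`1 − pᵢ`. -/
def IsStochQuant {n : ℕ} (s : ℕ) {Ω : Type*} [MeasurableSpace Ω] (μ : Measure Ω)
    (v : EuclideanSpace ℝ (Fin n)) (Qv : Ω → EuclideanSpace ℝ (Fin n)) : Prop :=
  ∃ (ξ : Fin n → Ω → ℝ) (ℓ : Fin n → ℕ),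
    (∀ i, Measurable (ξ i)) ∧
    iIndepFun ξ μ ∧
    (∀ i, ℓ i ≤ s - 1) ∧
    (∀ i, (ℓ i : ℝ) / s ≤ |v i| / ‖v‖ ∧ |v i| / ‖v‖ ≤ ((ℓ i : ℝ) + 1) / s) ∧
    (∀ i, μ {ω | ξ i ω = ((ℓ i : ℝ) + 1) / s} =
        ENNReal.ofReal (|v i| / ‖v‖ * s - ℓ i)) ∧
    (∀ i, μ {ω | ξ i ω = (ℓ i : ℝ) / s} =
        1 - ENNReal.ofReal (|v i| / ‖v‖ * s - ℓ i)) ∧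
    (∀ ω i, Qv ω i = ‖v‖ * (if 0 ≤ v i then (1 : ℝ) else -1) * ξ i ω)

/-- **Sparsity of stochastic quantization:** the expected number of nonzero
coordinates satisfies `E[‖Q_s(v)‖₀] ≤ s(s + √n)`. -/
theorem stochQuant_sparsity {n : ℕ} (hn : 1 ≤ n)
    (v : EuclideanSpace ℝ (Fin n)) (hv : v ≠ 0) (s : ℕ) (hs : 1 ≤ s)
    {Ω : Type*} [MeasurableSpace Ω] (μ : Measure Ω) [IsProbabilityMeasure μ]
    (Qv : Ω → EuclideanSpace ℝ (Fin n)) (hQ : IsStochQuant s μ v Qv) :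
    ∫ ω, ((Finset.univ.filter (fun i : Fin n => Qv ω i ≠ 0)).card : ℝ) ∂μ ≤
      (s : ℝ) * (s + Real.sqrt n) := by
  obtain ⟨ξ, ℓ, hmeas, -, hℓle, hrange, hhi, hlo, hQeq⟩ := hQ
  have hvnorm : (0:ℝ) < ‖v‖ := norm_pos_iff.mpr hv
  have hs0 : (0:ℝ) < s := by exact_mod_cast Nat.lt_of_lt_of_le Nat.zero_lt_one hs
  have ha0 : ∀ i, (0:ℝ) ≤ |v i| / ‖v‖ := fun i => div_nonneg (abs_nonneg _) hvnorm.le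
  -- nonzero sets
  have hiff : ∀ ω i, Qv ω i ≠ 0 ↔ ξ i ω ≠ 0 := by
    intro ω i
    have hc : ‖v‖ * (if 0 ≤ v i then (1 : ℝ) else -1) ≠ 0 := by
      rcases le_or_gt 0 (v i) with h | h
      · simp [h, hvnorm.ne']
      · simp [not_le.mpr h, hvnorm.ne']
    rw [hQeq ω i]
    constructor
    · intro h hx
      exact h (by rw [hx, mul_zero])
    · intro h
      exact mul_ne_zero hc h
  have hAmeas : ∀ i, MeasurableSet {ω | ξ i ω ≠ 0} := by
    intro i
    exact (hmeas i (measurableSet_singleton 0)).compl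
  -- per-coordinate bound
  have key : ∀ i, (μ {ω | ξ i ω ≠ 0}).toReal ≤ s * (|v i| / ‖v‖) := by
    intro i
    rcases Nat.eq_zero_or_pos (ℓ i) with h0 | h1
    · have hub := (hrange i).2
      rw [h0] at hub
      push_cast at hub
      have hp1 : |v i| / ‖v‖ * s ≤ 1 := by
        rw [div_le_div_iff₀ (by linarith) hs0] at hub
        rw [div_mul_eq_mul_div, div_le_one hvnorm]
        nlinarith
      have hp0 : (0:ℝ) ≤ |v i| / ‖v‖ * s := mul_nonneg (ha0 i) hs0.le
      have hms : MeasurableSet {ω | ξ i ω = 0} := hmeas i (measurableSet_singleton 0)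
      have hμ0 : μ {ω | ξ i ω = 0} = 1 - ENNReal.ofReal (|v i| / ‖v‖ * s) := by
        have := hlo i
        rw [h0] at this
        push_cast at this
        rw [zero_div] at this
        simpa using this
      have hμne : μ {ω | ξ i ω ≠ 0} = ENNReal.ofReal (|v i| / ‖v‖ * s) := by
        have hcompl : {ω | ξ i ω ≠ 0} = {ω | ξ i ω = 0}ᶜ := rfl
        rw [hcompl, prob_compl_eq_one_sub hms, hμ0,
          ENNReal.sub_sub_cancel ENNReal.one_ne_top
            (by simpa [ENNReal.ofReal_le_one] using hp1)]
      rw [hμne, ENNReal.toReal_ofReal hp0, mul_comm]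
    · have hlb := (hrange i).1
      have hℓ1 : (1:ℝ) ≤ (ℓ i : ℝ) := by exact_mod_cast h1
      have h1' : (1:ℝ) ≤ s * (|v i| / ‖v‖) := by
        rw [div_le_div_iff₀ hs0 hvnorm] at hlb
        rw [mul_comm, div_mul_eq_mul_div, le_div_iff₀ hvnorm]
        nlinarith
      have hle1 : (μ {ω | ξ i ω ≠ 0}).toReal ≤ 1 := by
        have h := ENNReal.toReal_mono (by simp) (prob_le_one (μ := μ) (s := {ω | ξ i ω ≠ 0}))
        simpa using h
      linarith
  -- rewrite integral as sum of measures
  have hint : ∫ ω, ((Finset.univ.filter (fun i : Fin n => Qv ω i ≠ 0)).card : ℝ) ∂μ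
      = ∑ i : Fin n, (μ {ω | ξ i ω ≠ 0}).toReal := by
    have hfun : ∀ ω, ((Finset.univ.filter (fun i : Fin n => Qv ω i ≠ 0)).card : ℝ)
        = ∑ i : Fin n, Set.indicator {ω' | ξ i ω' ≠ 0} (1 : Ω → ℝ) ω := by
      intro ω
      rw [Finset.card_filter]
      push_cast
      refine Finset.sum_congr rfl fun i _ => ?_
      rw [Set.indicator_apply]
      by_cases h : ξ i ω ≠ 0
      · simp [h, (hiff ω i).mpr h, Set.mem_setOf_eq]
      · have : ¬ Qv ω i ≠ 0 := fun hh => h ((hiff ω i).mp hh)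
        simp [h, this, Set.mem_setOf_eq]
    simp_rw [hfun]
    rw [integral_finset_sum]
    · exact Finset.sum_congr rfl fun i _ => integral_indicator_one (hAmeas i)
    · intro i _
      exact (integrable_const (1:ℝ)).indicator (hAmeas i)
  rw [hint]
  -- Cauchy-Schwarz
  have hsum : ∑ i : Fin n, |v i| / ‖v‖ ≤ Real.sqrt n := by
    have hsq : (∑ i : Fin n, |v i| / ‖v‖) ^ 2 ≤ n * ∑ i : Fin n, (|v i| / ‖v‖) ^ 2 := by
      simpa using sq_sum_le_card_mul_sum_sq (s := (Finset.univ : Finset (Fin n)))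
        (f := fun i => |v i| / ‖v‖)
    have hnorm : ‖v‖ ^ 2 = ∑ i : Fin n, |v i| ^ 2 := by
      rw [EuclideanSpace.norm_eq, Real.sq_sqrt (Finset.sum_nonneg fun i _ => sq_nonneg _)]
      simp [Real.norm_eq_abs]
    have hsum_sq : ∑ i : Fin n, (|v i| / ‖v‖) ^ 2 = 1 := by
      have h2 : ∑ i : Fin n, (|v i| / ‖v‖) ^ 2 = (∑ i : Fin n, |v i| ^ 2) / ‖v‖ ^ 2 := by
        rw [Finset.sum_div]
        exact Finset.sum_congr rfl fun i _ => div_pow _ _ _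
      rw [h2, ← hnorm, div_self (by positivity)]
    rw [hsum_sq, mul_one] at hsq
    calc ∑ i : Fin n, |v i| / ‖v‖
        = Real.sqrt ((∑ i : Fin n, |v i| / ‖v‖) ^ 2) := by
          rw [Real.sqrt_sq (Finset.sum_nonneg fun i _ => ha0 i)]
      _ ≤ Real.sqrt n := Real.sqrt_le_sqrt hsq
  calc ∑ i : Fin n, (μ {ω | ξ i ω ≠ 0}).toReal
      ≤ ∑ i : Fin n, (s : ℝ) * (|v i| / ‖v‖) := Finset.sum_le_sum fun i _ => key i
    _ = s * ∑ i : Fin n, |v i| / ‖v‖ := by rw [Finset.mul_sum]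
    _ ≤ s * Real.sqrt n := mul_le_mul_of_nonneg_left hsum hs0.le
    _ ≤ s * (s + Real.sqrt n) := by nlinarith [Real.sqrt_nonneg (n:ℝ)]
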